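/- arXiv:1605.00499 — 3 statements merged into one kernel-verified Lean document; each statement's English description precedes it below -/
import Mathlib

section
/- Let $Q_n:\Theta\to\mathbb{R}$ be random functions, $\Theta_I\subseteq\Theta$, and suppose (i) $\sup_{\theta\in\Theta_I}Q_n(\theta)$ converges in distribution to a random variable $W$ whose cdf $F_W$ is continuous at its $\alpha$-quantile $w_\alpha$, and (ii) $(w_{n,\alpha})$ is a sequence of random variables with $w_{n,\alpha}\ge w_\alpha+o_P(1)$. Then the set $\widehat\Theta_\alpha=\{\theta\in\Theta: Q_n(\theta)\le w_{n,\alpha}\}$ satisfies $\liminf_{n\to\infty}P(\Theta_I\subseteq\widehat\Theta_\alpha)\ge\alpha$. If instead $w_{n,\alpha}=w_\alpha+o_P(1)$, then $\lim_{n\to\infty}P(\Theta_I\subseteq\widehat\Theta_\alpha)=\alpha$. -/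
open MeasureTheory Filter Topology

private lemma toReal_union_le {Ω : Type*} [MeasurableSpace Ω] (μ : Measure Ω)
    [IsFiniteMeasure μ] {A B C : Set Ω} (h : A ⊆ B ∪ C) :
    (μ A).toReal ≤ (μ B).toReal + (μ C).toReal := by
  rw [← ENNReal.toReal_add (measure_ne_top μ B) (measure_ne_top μ C)]
  exact ENNReal.toReal_mono
    (ENNReal.add_ne_top.mpr ⟨measure_ne_top μ B, measure_ne_top μ C⟩)
    ((measure_mono h).trans (measure_union_le _ _))

/-- Lemma 2.1 (basic coverage lemma): if the sup of the criterion over the identified set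
converges in distribution to `W` with cdf `F` continuous at its `α`-quantile `wα`, then
critical values no smaller (resp. equal) to `wα + o_P(1)` yield asymptotic coverage
at least (resp. exactly) `α`. -/
theorem stmt0 {Ω : Type*} [MeasurableSpace Ω] (μ : Measure Ω) [IsProbabilityMeasure μ]
    {Θ : Type*} (Q : ℕ → Ω → Θ → ℝ) (ΘI : Set Θ)
    (F : ℝ → ℝ) (hFmono : Monotone F)
    (hFtop : Tendsto F atTop (𝓝 1)) (hFbot : Tendsto F atBot (𝓝 0))
    (α : ℝ) (hα0 : 0 < α) (hα1 : α < 1)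
    (wα : ℝ) (hwα : wα = sInf {c : ℝ | α ≤ F c})
    (hcontα : ContinuousAt F wα)
    (hconv : ∀ c : ℝ, ContinuousAt F c →
      Tendsto (fun n => (μ {ω | ∀ θ ∈ ΘI, Q n ω θ ≤ c}).toReal) atTop (𝓝 (F c)))
    (w : ℕ → Ω → ℝ) :
    ((∀ ε : ℝ, 0 < ε →
        Tendsto (fun n => (μ {ω | w n ω < wα - ε}).toReal) atTop (𝓝 0)) →
      α ≤ Filter.liminf (fun n => (μ {ω | ∀ θ ∈ ΘI, Q n ω θ ≤ w n ω}).toReal) atTop) ∧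
    ((∀ ε : ℝ, 0 < ε →
        Tendsto (fun n => (μ {ω | ε < |w n ω - wα|}).toReal) atTop (𝓝 0)) →
      Tendsto (fun n => (μ {ω | ∀ θ ∈ ΘI, Q n ω θ ≤ w n ω}).toReal) atTop (𝓝 α)) := by
  set p : ℕ → ℝ := fun n => (μ {ω | ∀ θ ∈ ΘI, Q n ω θ ≤ w n ω}).toReal with hp
  have hp0 : ∀ n, 0 ≤ p n := fun n => ENNReal.toReal_nonneg
  have hp1 : ∀ n, p n ≤ 1 := by
    intro n
    have : (μ {ω | ∀ θ ∈ ΘI, Q n ω θ ≤ w n ω}).toReal ≤ (1 : ENNReal).toReal :=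
      ENNReal.toReal_mono ENNReal.one_ne_top prob_le_one
    simpa using this
  -- the quantile set
  have hSne : Set.Nonempty {c : ℝ | α ≤ F c} := by
    obtain ⟨c, hc⟩ := (hFtop.eventually (eventually_gt_nhds hα1)).exists
    exact ⟨c, hc.le⟩
  obtain ⟨b, hb⟩ := (hFbot.eventually (eventually_lt_nhds hα0)).exists
  have hbdd : BddBelow {c : ℝ | α ≤ F c} := by
    refine ⟨b, fun c hc => ?_⟩
    by_contra h
    push_neg at h
    exact absurd (le_trans hc (hFmono h.le)) (not_le.mpr hb)
  -- F wα = α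
  have hFwα : F wα = α := by
    have hle : F wα ≤ α := by
      by_contra h
      push_neg at h
      obtain ⟨ε, hε, hball⟩ := Metric.continuousAt_iff.mp hcontα (F wα - α) (by linarith)
      have hmem : wα - ε / 2 ∈ {c : ℝ | α ≤ F c} := by
        have := hball (x := wα - ε / 2)
          (by rw [Real.dist_eq, abs_lt]; constructor <;> linarith)
        rw [Real.dist_eq, abs_lt] at this
        simp only [Set.mem_setOf_eq]
        linarith
      have := csInf_le hbdd hmem
      rw [← hwα] at this
      linarith
    have hge : α ≤ F wα := by
      by_contra h
      push_neg at h
      obtain ⟨ε, hε, hball⟩ := Metric.continuousAt_iff.mp hcontα (α - F wα) (by linarith)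
      have hlb : wα + ε / 2 ≤ sInf {c : ℝ | α ≤ F c} := by
        refine le_csInf hSne fun c hc => ?_
        by_contra hcon
        push_neg at hcon
        have hwc : wα ≤ c := by rw [hwα]; exact csInf_le hbdd hc
        have := hball (x := c)
          (by rw [Real.dist_eq, abs_lt]; constructor <;> linarith)
        rw [Real.dist_eq, abs_lt] at this
        simp only [Set.mem_setOf_eq] at hc
        linarith
      rw [← hwα] at hlb
      linarith
    linarith
  -- continuity points are dense
  have hdense : ∀ a b : ℝ, a < b → ∃ c, a < c ∧ c < b ∧ ContinuousAt F c := by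
    intro a b hab
    have hcnt : Set.Countable {x | ¬ ContinuousAt F x} := hFmono.countable_not_continuousAt
    have hd : Dense {x | ¬ ContinuousAt F x}ᶜ := hcnt.dense_compl ℝ
    obtain ⟨c, hc, hc2⟩ := hd.exists_between hab
    exact ⟨c, hc2.1, hc2.2, not_not.mp hc⟩
  -- key lower bound on liminf
  have key1 : (∀ ε : ℝ, 0 < ε →
        Tendsto (fun n => (μ {ω | w n ω < wα - ε}).toReal) atTop (𝓝 0)) →
      α ≤ Filter.liminf p atTop := by
    intro hyp
    refine le_of_forall_pos_le_add fun δ hδ => ?_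
    obtain ⟨ε, hε, hball⟩ := Metric.continuousAt_iff.mp hcontα δ hδ
    obtain ⟨c, hc1, hc2, hcc⟩ := hdense (wα - ε) wα (by linarith)
    have hFc : α - δ < F c := by
      have := hball (x := c) (by rw [Real.dist_eq, abs_lt]; constructor <;> linarith)
      rw [Real.dist_eq, abs_lt, hFwα] at this
      linarith
    have hε'pos : 0 < wα - c := by linarith
    have ht := hyp (wα - c) hε'pos
    have hconvc := hconv c hcc
    have hcc' : wα - (wα - c) = c := by ring
    rw [hcc'] at ht
    have hsum : Tendsto (fun n => (μ {ω | ∀ θ ∈ ΘI, Q n ω θ ≤ c}).toReal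
        - (μ {ω | w n ω < c}).toReal) atTop (𝓝 (F c - 0)) := hconvc.sub ht
    have hbnd : ∀ n, (μ {ω | ∀ θ ∈ ΘI, Q n ω θ ≤ c}).toReal
        - (μ {ω | w n ω < c}).toReal ≤ p n := by
      intro n
      have hsub : {ω | ∀ θ ∈ ΘI, Q n ω θ ≤ c} ⊆
          {ω | ∀ θ ∈ ΘI, Q n ω θ ≤ w n ω} ∪ {ω | w n ω < c} := by
        intro ω hω
        by_cases h : ∀ θ ∈ ΘI, Q n ω θ ≤ w n ω
        · exact Or.inl h
        · push_neg at h
          obtain ⟨θ, hθ, hq⟩ := h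
          exact Or.inr (lt_of_lt_of_le hq (hω θ hθ))
      have := toReal_union_le μ hsub
      simp only [hp]
      linarith
    have hlim : F c - 0 ≤ Filter.liminf p atTop := by
      rw [← hsum.liminf_eq]
      have hb1 : IsBoundedUnder (· ≥ ·) atTop (fun n => (μ {ω | ∀ θ ∈ ΘI, Q n ω θ ≤ c}).toReal
          - (μ {ω | w n ω < c}).toReal) := hsum.isBoundedUnder_ge
      have hb2 : IsBoundedUnder (· ≤ ·) atTop p := isBoundedUnder_of ⟨1, fun n => hp1 n⟩
      exact liminf_le_liminf (Eventually.of_forall hbnd) hb1 hb2.isCoboundedUnder_ge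
    linarith
  constructor
  · exact key1
  · intro hyp2
    have hyp1 : ∀ ε : ℝ, 0 < ε →
        Tendsto (fun n => (μ {ω | w n ω < wα - ε}).toReal) atTop (𝓝 0) := by
      intro ε hε
      refine squeeze_zero (fun n => ENNReal.toReal_nonneg) (fun n => ?_) (hyp2 ε hε)
      refine ENNReal.toReal_mono (measure_ne_top μ _) (measure_mono fun ω hω => ?_)
      simp only [Set.mem_setOf_eq] at *
      calc ε < wα - w n ω := by linarith
        _ ≤ |w n ω - wα| := by rw [abs_sub_comm]; exact le_abs_self _
    have hliminf : α ≤ Filter.liminf p atTop := key1 hyp1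
    have hlimsup : Filter.limsup p atTop ≤ α := by
      refine le_of_forall_pos_le_add fun δ hδ => ?_
      obtain ⟨ε, hε, hball⟩ := Metric.continuousAt_iff.mp hcontα δ hδ
      obtain ⟨c, hc1, hc2, hcc⟩ := hdense wα (wα + ε) (by linarith)
      have hFc : F c < α + δ := by
        have := hball (x := c) (by rw [Real.dist_eq, abs_lt]; constructor <;> linarith)
        rw [Real.dist_eq, abs_lt, hFwα] at this
        linarith
      have hε'pos : 0 < c - wα := by linarith
      have hs := hyp2 (c - wα) hε'pos
      have hconvc := hconv c hcc
      have hsum : Tendsto (fun n => (μ {ω | ∀ θ ∈ ΘI, Q n ω θ ≤ c}).toReal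
          + (μ {ω | c - wα < |w n ω - wα|}).toReal) atTop (𝓝 (F c + 0)) := hconvc.add hs
      have hbnd : ∀ n, p n ≤ (μ {ω | ∀ θ ∈ ΘI, Q n ω θ ≤ c}).toReal
          + (μ {ω | c - wα < |w n ω - wα|}).toReal := by
        intro n
        refine toReal_union_le μ ?_
        intro ω hω
        by_cases h : c - wα < |w n ω - wα|
        · exact Or.inr h
        · push_neg at h
          rw [abs_le] at h
          refine Or.inl fun θ hθ => ?_
          have := hω θ hθ
          linarith [h.2]
      have hls : Filter.limsup p atTop ≤ F c + 0 := by
        rw [← hsum.limsup_eq]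
        have hb1 : IsBoundedUnder (· ≥ ·) atTop p := isBoundedUnder_of ⟨0, fun n => hp0 n⟩
        exact limsup_le_limsup (Eventually.of_forall hbnd) hb1.isCoboundedUnder_le
          hsum.isBoundedUnder_le
      linarith
    exact tendsto_of_le_liminf_of_limsup_le hliminf hlimsup
      (isBoundedUnder_of ⟨1, fun n => hp1 n⟩)
      (isBoundedUnder_of ⟨0, fun n => hp0 n⟩)
end

section
/- Let $Z=(X,Y)$ be a standard bivariate normal vector (independent $N(0,1)$ components), let $\rho\in(-1,1)$, and let $V=Y\sin(\varphi/2)+X\cos(\varphi/2)$ where $\rho=\sin(\varphi/2)$. Then for every $w\ge 0$, $P(Y^2\le w\mid V\ge 0)=\Phi(\sqrt w)-\Phi(-\sqrt w)$, i.e. it equals the chi-squared-1 cdf at $w$, regardless of the value of $\rho$. -/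
open MeasureTheory ProbabilityTheory

/-- The standard normal cdf. -/
noncomputable def stdNormalCDF (x : ℝ) : ℝ :=
  ((gaussianReal 0 1) (Set.Iic x)).toReal

lemma gauss_neg : (gaussianReal 0 1).map (fun x => -x) = gaussianReal 0 1 := by
  have h := gaussianReal_map_const_mul (μ := 0) (v := 1) (-1)
  have h2 : (fun x : ℝ => -x) = ((-1 : ℝ) * ·) := by funext x; ring
  rw [h2, h]
  norm_num

lemma gauss_singleton (a : ℝ) : gaussianReal 0 1 {a} = 0 :=
  (gaussianReal_absolutelyContinuous 0 (by norm_num)) (measure_singleton a)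

lemma null_line {s c : ℝ} (hc : c ≠ 0) :
    ((gaussianReal 0 1).prod (gaussianReal 0 1)) {p : ℝ × ℝ | p.2 * s + p.1 * c = 0} = 0 := by
  have hm : MeasurableSet {p : ℝ × ℝ | p.2 * s + p.1 * c = 0} :=
    measurableSet_eq_fun (by fun_prop) measurable_const
  rw [Measure.prod_apply_symm hm]
  have : ∀ y : ℝ, ((fun x => (x, y)) ⁻¹' {p : ℝ × ℝ | p.2 * s + p.1 * c = 0}) = {(-(y * s)) / c} := by
    intro y
    ext x
    simp only [Set.mem_preimage, Set.mem_setOf_eq, Set.mem_singleton_iff]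
    constructor
    · intro h; field_simp; linarith
    · intro h; subst h; field_simp; ring
  simp only [this, gauss_singleton]
  simp

lemma half_lemma {s c : ℝ} (hc : c ≠ 0) (S : Set (ℝ × ℝ)) (hS : MeasurableSet S)
    (hSsym : (fun p : ℝ × ℝ => (-p.1, -p.2)) ⁻¹' S = S) :
    ((gaussianReal 0 1).prod (gaussianReal 0 1)) (S ∩ {p : ℝ × ℝ | 0 ≤ p.2 * s + p.1 * c})
      + ((gaussianReal 0 1).prod (gaussianReal 0 1)) (S ∩ {p : ℝ × ℝ | 0 ≤ p.2 * s + p.1 * c})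
      = ((gaussianReal 0 1).prod (gaussianReal 0 1)) S := by
  set ν := (gaussianReal 0 1).prod (gaussianReal 0 1) with hν
  set T : ℝ × ℝ → ℝ × ℝ := fun p => (-p.1, -p.2) with hT
  have hTm : Measurable T := (measurable_fst.neg).prodMk (measurable_snd.neg)
  have hνT : ν.map T = ν := by
    have : T = Prod.map (fun x : ℝ => -x) (fun x : ℝ => -x) := rfl
    rw [this, ← Measure.map_prod_map _ _ measurable_neg measurable_neg, gauss_neg]
  have hPm : MeasurableSet {p : ℝ × ℝ | 0 ≤ p.2 * s + p.1 * c} :=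
    measurableSet_le measurable_const (by fun_prop)
  set A := S ∩ {p : ℝ × ℝ | 0 ≤ p.2 * s + p.1 * c} with hA
  set B := S ∩ {p : ℝ × ℝ | p.2 * s + p.1 * c ≤ 0} with hB
  have hAm : MeasurableSet A := hS.inter hPm
  have hBm : MeasurableSet B := hS.inter (measurableSet_le (by fun_prop) measurable_const)
  have hνB : ν B = ν A := by
    have hpre : T ⁻¹' A = B := by
      ext p
      simp only [hA, hB, hT, Set.mem_preimage, Set.mem_inter_iff, Set.mem_setOf_eq]
      rw [show ((-p.1, -p.2) : ℝ × ℝ) ∈ S ↔ p ∈ S from Set.ext_iff.mp hSsym p]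
      constructor
      · rintro ⟨h1, h2⟩; exact ⟨h1, by linarith⟩
      · rintro ⟨h1, h2⟩; exact ⟨h1, by linarith⟩
    rw [← hpre, ← Measure.map_apply hTm hAm, hνT]
  have hunion : A ∪ B = S := by
    ext p
    simp only [hA, hB, Set.mem_union, Set.mem_inter_iff, Set.mem_setOf_eq]
    constructor
    · rintro (⟨h, _⟩ | ⟨h, _⟩) <;> exact h
    · intro h
      rcases le_total 0 (p.2 * s + p.1 * c) with h' | h'
      · exact Or.inl ⟨h, h'⟩
      · exact Or.inr ⟨h, h'⟩
  have hinter : ν (A ∩ B) = 0 := by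
    refine measure_mono_null ?_ (null_line hc (s := s))
    rintro p ⟨⟨_, h1⟩, ⟨_, h2⟩⟩
    exact le_antisymm h2 h1
  have := measure_union_add_inter (μ := ν) A hBm
  rw [hunion, hinter, add_zero] at this
  rw [this, hνB]

lemma gauss_Icc (a b : ℝ) (hab : a ≤ b) :
    ((gaussianReal 0 1) (Set.Icc a b)).toReal
      = ((gaussianReal 0 1) (Set.Iic b)).toReal - ((gaussianReal 0 1) (Set.Iic a)).toReal := by
  set γ := gaussianReal 0 1 with hγ
  have hu : Set.Iic a ∪ Set.Icc a b = Set.Iic b := by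
    ext x
    simp only [Set.mem_union, Set.mem_Iic, Set.mem_Icc]
    constructor
    · rintro (h | ⟨_, h⟩) <;> [exact h.trans hab; exact h]
    · intro h
      rcases le_total x a with h' | h'
      · exact Or.inl h'
      · exact Or.inr ⟨h', h⟩
  have hi : Set.Iic a ∩ Set.Icc a b = {a} := by
    ext x
    simp only [Set.mem_inter_iff, Set.mem_Iic, Set.mem_Icc, Set.mem_singleton_iff]
    constructor
    · rintro ⟨h1, h2, _⟩; exact le_antisymm h1 h2
    · rintro rfl; exact ⟨le_refl _, le_refl _, hab⟩
  have := measure_union_add_inter (μ := γ) (Set.Iic a)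
    (measurableSet_Icc : MeasurableSet (Set.Icc a b))
  rw [hu, hi, gauss_singleton, add_zero] at this
  have h1 : γ (Set.Iic b) ≠ ⊤ := measure_ne_top _ _
  have h2 : γ (Set.Iic a) ≠ ⊤ := measure_ne_top _ _
  have h3 : γ (Set.Icc a b) ≠ ⊤ := measure_ne_top _ _
  have := congrArg ENNReal.toReal this
  rw [ENNReal.toReal_add h2 h3] at this
  linarith

/-- For independent standard normals `X, Y`, `V = Y sin(φ/2) + X cos(φ/2)` with
`ρ = sin(φ/2) ∈ (-1,1)`: `P(Y² ≤ w ∣ V ≥ 0) = Φ(√w) - Φ(-√w)` for every `w ≥ 0`,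
regardless of `ρ`. -/
theorem stmt3 {Ω : Type*} [MeasurableSpace Ω] (μ : Measure Ω) [IsProbabilityMeasure μ]
    (X Y : Ω → ℝ) (hXm : Measurable X) (hYm : Measurable Y)
    (hX : Measure.map X μ = gaussianReal 0 1)
    (hY : Measure.map Y μ = gaussianReal 0 1)
    (hindep : IndepFun X Y μ)
    (φ ρ : ℝ) (hρ : ρ = Real.sin (φ / 2)) (hρ1 : -1 < ρ) (hρ2 : ρ < 1)
    (w : ℝ) (hw : 0 ≤ w) :
    (μ {ω | (Y ω) ^ 2 ≤ w ∧ 0 ≤ Y ω * Real.sin (φ / 2) + X ω * Real.cos (φ / 2)}).toReal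
        / (μ {ω | 0 ≤ Y ω * Real.sin (φ / 2) + X ω * Real.cos (φ / 2)}).toReal
      = stdNormalCDF (Real.sqrt w) - stdNormalCDF (-Real.sqrt w) := by
  set s := Real.sin (φ / 2) with hs
  set c := Real.cos (φ / 2) with hcdef
  have hsc : s ^ 2 + c ^ 2 = 1 := Real.sin_sq_add_cos_sq _
  have hc : c ≠ 0 := by
    intro h
    rw [h] at hsc
    rw [hρ] at hρ1 hρ2
    nlinarith
  set γ := gaussianReal 0 1 with hγ
  set ν := γ.prod γ with hν
  -- joint law
  have hmap : μ.map (fun ω => (X ω, Y ω)) = ν := by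
    rw [(indepFun_iff_map_prod_eq_prod_map_map hXm.aemeasurable hYm.aemeasurable).mp hindep,
      hX, hY]
  have hpm : Measurable (fun ω => (X ω, Y ω)) := hXm.prodMk hYm
  have hPm : MeasurableSet {p : ℝ × ℝ | 0 ≤ p.2 * s + p.1 * c} :=
    measurableSet_le measurable_const (by fun_prop)
  have hSm : MeasurableSet {p : ℝ × ℝ | p.2 ^ 2 ≤ w} :=
    measurableSet_le (by fun_prop) measurable_const
  set A := {p : ℝ × ℝ | p.2 ^ 2 ≤ w} ∩ {p : ℝ × ℝ | 0 ≤ p.2 * s + p.1 * c} with hA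
  have hAm : MeasurableSet A := hSm.inter hPm
  have hnum : μ {ω | (Y ω) ^ 2 ≤ w ∧ 0 ≤ Y ω * s + X ω * c} = ν A := by
    have : {ω | (Y ω) ^ 2 ≤ w ∧ 0 ≤ Y ω * s + X ω * c} = (fun ω => (X ω, Y ω)) ⁻¹' A := by
      ext ω; simp [hA]
    rw [this, ← Measure.map_apply hpm hAm, hmap]
  have hden : μ {ω | 0 ≤ Y ω * s + X ω * c} = ν {p : ℝ × ℝ | 0 ≤ p.2 * s + p.1 * c} := by
    have : {ω | 0 ≤ Y ω * s + X ω * c} = (fun ω => (X ω, Y ω)) ⁻¹' {p : ℝ × ℝ | 0 ≤ p.2 * s + p.1 * c} := by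
      ext ω; simp
    rw [this, ← Measure.map_apply hpm hPm, hmap]
  -- halving for numerator
  have hnum2 : ν A + ν A = ν {p : ℝ × ℝ | p.2 ^ 2 ≤ w} := by
    apply half_lemma hc
    · exact hSm
    · ext p; simp [neg_pow]
  -- halving for denominator
  have hden2 : ν {p : ℝ × ℝ | 0 ≤ p.2 * s + p.1 * c}
      + ν {p : ℝ × ℝ | 0 ≤ p.2 * s + p.1 * c} = 1 := by
    have := half_lemma hc (s := s) Set.univ MeasurableSet.univ (by simp)
    simpa using this
  -- value of ν S
  have hS : ν {p : ℝ × ℝ | p.2 ^ 2 ≤ w} = γ (Set.Icc (-Real.sqrt w) (Real.sqrt w)) := by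
    have h1 : {p : ℝ × ℝ | p.2 ^ 2 ≤ w} = Set.univ ×ˢ Set.Icc (-Real.sqrt w) (Real.sqrt w) := by
      ext p
      simp only [Set.mem_setOf_eq, Set.mem_prod, Set.mem_univ, true_and, Set.mem_Icc]
      constructor
      · intro h
        have := Real.sqrt_le_sqrt h
        rw [Real.sqrt_sq_eq_abs] at this
        exact abs_le.mp this
      · intro ⟨h1, h2⟩
        nlinarith [Real.sq_sqrt hw]
    rw [h1, hν, Measure.prod_prod, measure_univ, one_mul]
  -- toReal computations
  have hAfin : ν A ≠ ⊤ := measure_ne_top _ _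
  have hPfin : ν {p : ℝ × ℝ | 0 ≤ p.2 * s + p.1 * c} ≠ ⊤ := measure_ne_top _ _
  have hnumR : 2 * (ν A).toReal = (γ (Set.Icc (-Real.sqrt w) (Real.sqrt w))).toReal := by
    have := congrArg ENNReal.toReal hnum2
    rw [ENNReal.toReal_add hAfin hAfin, hS] at this
    linarith
  have hdenR : 2 * (ν {p : ℝ × ℝ | 0 ≤ p.2 * s + p.1 * c}).toReal = 1 := by
    have := congrArg ENNReal.toReal hden2
    rw [ENNReal.toReal_add hPfin hPfin] at this
    simp only [ENNReal.toReal_one] at this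
    linarith
  rw [hnum, hden]
  have hIcc := gauss_Icc (-Real.sqrt w) (Real.sqrt w)
    (by linarith [Real.sqrt_nonneg w])
  have hd : (ν {p : ℝ × ℝ | 0 ≤ p.2 * s + p.1 * c}).toReal = 1 / 2 := by linarith
  rw [hd]
  simp only [stdNormalCDF]
  rw [hγ] at hnumR
  rw [← hIcc]
  field_simp
  linarith
end

section
/- Let $Z\sim N(0,I_{d^*})$ in $\mathbb{R}^{d^*}$ with $d^*\ge 1$, and let $T_1,T_2$ be closed half-spaces of the form $\{z: a'z\le 0\}$ and $\{z: b'z\le 0\}$ for nonzero $a,b\in\mathbb{R}^{d^*}$. Let $W^*=\max_{i\in\{1,2\}}\inf_{t\in T_i}\|Z-t\|^2$. Then $P(W^*\le w)\ge F_{\chi^2_1}(w)$ for all $w\ge 0$, i.e. $W^*$ is stochastically dominated by a chi-squared random variable with one degree of freedom. -/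
open MeasureTheory ProbabilityTheory

open scoped ENNReal NNReal

lemma my_lintegral_pi {n : ℕ} (f : Fin n → ℝ → ℝ≥0∞) (hf : ∀ i, Measurable (f i)) :
    ∫⁻ x : Fin n → ℝ, ∏ i, f i (x i) ∂(Measure.pi fun _ => (volume : Measure ℝ)) =
      ∏ i, ∫⁻ t, f i t := by
  induction n with
  | zero => simp
  | succ n ih =>
    have h := (measurePreserving_piFinSuccAbove (fun _ : Fin (n+1) => (volume : Measure ℝ)) 0).symm
    rw [← h.lintegral_comp_emb (MeasurableEquiv.measurableEmbedding _)]
    have heval : ∀ (y : ℝ × (Fin n → ℝ)) (i : Fin (n+1)),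
        ((MeasurableEquiv.piFinSuccAbove (fun _ : Fin (n+1) => ℝ) 0).symm y) i
          = (Fin.cons y.1 y.2 : Fin (n+1) → ℝ) i := by
      intro y i
      simp [MeasurableEquiv.piFinSuccAbove_symm_apply, Fin.insertNthEquiv, Fin.insertNth_zero]
    simp_rw [heval, Fin.prod_univ_succ, Fin.cons_zero, Fin.cons_succ]
    rw [lintegral_prod_mul (f := fun t => f 0 t)
      (g := fun x : Fin n → ℝ => ∏ i : Fin n, f i.succ (x i)) (hf 0).aemeasurable
      ((Finset.measurable_prod _ fun i _ =>
        (hf i.succ).comp (measurable_pi_apply i)).aemeasurable),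
      ih (fun i => f i.succ) (fun i => hf _)]

lemma my_map_withDensity {α β : Type*} [MeasurableSpace α] [MeasurableSpace β]
    (μ : Measure α) (e : α ≃ᵐ β) (g : α → ℝ≥0∞) (hg : Measurable g) :
    (μ.withDensity g).map e = (μ.map e).withDensity (g ∘ e.symm) := by
  ext s hs
  rw [Measure.map_apply e.measurable hs,
    withDensity_apply _ (e.measurable hs),
    withDensity_apply _ hs,
    setLIntegral_map hs (hg.comp e.symm.measurable) e.measurable]
  refine setLIntegral_congr_fun (e.measurable hs) ?_
  intro x _
  simp

lemma my_pi_gaussian {n : ℕ} :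
    Measure.pi (fun _ : Fin n => gaussianReal 0 1) =
      (Measure.pi fun _ : Fin n => (volume : Measure ℝ)).withDensity
        (fun x => ∏ i, gaussianPDF 0 1 (x i)) := by
  set φ : ℝ → ℝ≥0∞ := gaussianPDF 0 1 with hφdef
  have hφ : Measurable φ := measurable_gaussianPDF 0 1
  have hgr : gaussianReal 0 1 = (volume : Measure ℝ).withDensity φ :=
    gaussianReal_of_var_ne_zero 0 one_ne_zero
  refine Measure.pi_eq fun s hs => ?_
  have hmeas : Measurable fun x : Fin n → ℝ => ∏ i, φ (x i) :=
    Finset.measurable_prod _ fun i _ => hφ.comp (measurable_pi_apply i)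
  rw [withDensity_apply _ (MeasurableSet.univ_pi hs)]
  have : ∀ x : Fin n → ℝ, (Set.univ.pi s).indicator (fun x => ∏ i, φ (x i)) x
      = ∏ i, ((s i).indicator φ) (x i) := by
    intro x
    by_cases hx : x ∈ Set.univ.pi s
    · rw [Set.indicator_of_mem hx]
      refine Finset.prod_congr rfl fun i _ => ?_
      rw [Set.indicator_of_mem (hx i (Set.mem_univ i))]
    · rw [Set.indicator_of_notMem hx]
      rw [Set.mem_univ_pi] at hx
      push_neg at hx
      obtain ⟨i, hi⟩ := hx
      exact (Finset.prod_eq_zero (Finset.mem_univ i)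
        (by rw [Set.indicator_of_notMem hi])).symm
  rw [← lintegral_indicator (MeasurableSet.univ_pi hs)]
  simp_rw [this]
  rw [my_lintegral_pi _ (fun i => hφ.indicator (hs i))]
  refine Finset.prod_congr rfl fun i _ => ?_
  rw [hgr, withDensity_apply _ (hs i), ← lintegral_indicator (hs i)]

lemma my_pi_map_eval {n : ℕ} (ν : Measure ℝ) [IsProbabilityMeasure ν] (i : Fin n) :
    (Measure.pi fun _ : Fin n => ν).map (Function.eval i) = ν := by
  ext s hs
  rw [Measure.map_apply (measurable_pi_apply i) hs]
  have : Function.eval i ⁻¹' s = Set.univ.pi (Function.update (fun _ : Fin n => (Set.univ : Set ℝ)) i s) := by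
    ext x
    simp only [Set.mem_preimage, Set.mem_univ_pi]
    constructor
    · intro hx j
      by_cases hj : j = i
      · subst hj; simpa using hx
      · simp [Function.update_of_ne hj]
    · intro hx
      have := hx i
      simpa using this
  rw [this, Measure.pi_pi]
  rw [Fintype.prod_eq_single i (fun j hj => by simp [Function.update_of_ne hj])]
  simp

lemma my_prod_gaussianPDF {d : ℕ} (y : Fin d → ℝ) :
    ∏ i, gaussianPDF 0 1 (y i) =
      ENNReal.ofReal ((Real.sqrt (2 * Real.pi))⁻¹ ^ d *
        Real.exp (-(∑ i, (y i) ^ 2) / 2)) := by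
  have hpdf : ∀ t : ℝ, gaussianPDF 0 1 t
      = ENNReal.ofReal ((Real.sqrt (2 * Real.pi))⁻¹ * Real.exp (-(t ^ 2) / 2)) := by
    intro t
    rw [gaussianPDF, gaussianPDFReal]
    norm_num
  simp_rw [hpdf]
  rw [← ENNReal.ofReal_prod_of_nonneg (fun i _ =>
    mul_nonneg (inv_nonneg.2 (Real.sqrt_nonneg _)) (Real.exp_nonneg _))]
  congr 1
  rw [Finset.prod_mul_distrib, Finset.prod_const, ← Real.exp_sum]
  congr 2
  · simp
  · rw [← Finset.sum_div, ← Finset.sum_neg_distrib]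

lemma my_law_inner {d : ℕ} (hd : 1 ≤ d) {Ω : Type*} [MeasurableSpace Ω]
    (μ : Measure Ω) [IsProbabilityMeasure μ]
    (Z : Ω → EuclideanSpace ℝ (Fin d)) (hZm : Measurable Z)
    (hlaw : ∀ i : Fin d, Measure.map (fun ω => Z ω i) μ = gaussianReal 0 1)
    (hindep : iIndepFun (fun (i : Fin d) (ω : Ω) => Z ω i) μ)
    (u : EuclideanSpace ℝ (Fin d)) (hu : ‖u‖ = 1) :
    μ.map (fun ω => (inner ℝ u (Z ω) : ℝ)) = gaussianReal 0 1 := by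
  classical
  set ν : Measure ℝ := gaussianReal 0 1 with hν
  -- coordinate maps are measurable
  have hZi : ∀ i : Fin d, Measurable fun ω => Z ω i :=
    fun i => (measurable_pi_apply i).comp ((WithLp.measurable_ofLp 2 _).comp hZm)
  -- the joint law is the product of standard gaussians
  set J : Ω → (Fin d → ℝ) := fun ω i => Z ω i with hJ
  have hJm : Measurable J := measurable_pi_lambda _ hZi
  have hJlaw : μ.map J = Measure.pi (fun _ : Fin d => ν) := by
    refine (Measure.pi_eq fun s hs => ?_).symm
    rw [Measure.map_apply hJm (MeasurableSet.univ_pi hs)]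
    have hpre : J ⁻¹' Set.univ.pi s = ⋂ i ∈ Finset.univ, (fun ω => Z ω i) ⁻¹' s i := by
      ext ω; simp [hJ, Set.mem_pi]
    rw [hpre, hindep.measure_inter_preimage_eq_mul Finset.univ (fun i _ => hs i)]
    refine Finset.prod_congr rfl fun i _ => ?_
    rw [← Measure.map_apply (hZi i) (hs i), hlaw i]
  -- orthonormal basis with `b i₀ = u`
  set i₀ : Fin d := ⟨0, hd⟩ with hi₀
  have hcard : Module.finrank ℝ (EuclideanSpace ℝ (Fin d)) = Fintype.card (Fin d) := by
    simp [finrank_euclideanSpace]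
  have hON : Orthonormal ℝ (({i₀} : Set (Fin d)).restrict (fun _ => u)) := by
    rw [orthonormal_iff_ite]
    rintro ⟨i, hi⟩ ⟨j, hj⟩
    simp only [Set.mem_singleton_iff] at hi hj
    have : (⟨i, hi⟩ : ({i₀} : Set (Fin d))) = ⟨j, hj⟩ := by
      subst hi; subst hj; rfl
    rw [this, if_pos rfl]
    show (inner ℝ u u : ℝ) = 1
    rw [real_inner_self_eq_norm_sq, hu]
    norm_num
  obtain ⟨b, hb⟩ := hON.exists_orthonormalBasis_extension_of_card_eq hcard
  have hbu : b i₀ = u := hb i₀ rfl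
  set e := (MeasurableEquiv.toLp 2 (Fin d → ℝ)).symm with he
  set brm : (EuclideanSpace ℝ (Fin d)) ≃ᵐ (EuclideanSpace ℝ (Fin d)) :=
    b.repr.toHomeomorph.toMeasurableEquiv with hbrm
  set R : (Fin d → ℝ) ≃ᵐ (Fin d → ℝ) := e.symm.trans (brm.trans e) with hR
  have hfeq : (fun ω => (inner ℝ u (Z ω) : ℝ)) = (Function.eval i₀) ∘ (⇑R) ∘ J := by
    funext ω
    show (inner ℝ u (Z ω) : ℝ) = b.repr (Z ω) i₀
    rw [b.repr_apply_apply, hbu]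
  rw [hfeq, ← Measure.map_map (measurable_pi_apply i₀) (R.measurable.comp hJm),
    ← Measure.map_map R.measurable hJm, hJlaw]
  have hmp : MeasurePreserving (⇑R) (volume : Measure (Fin d → ℝ)) volume := by
    have h1 := (EuclideanSpace.volume_preserving_symm_measurableEquiv_toLp (Fin d)).symm
    have h2 := b.measurePreserving_repr (F := EuclideanSpace ℝ (Fin d))
    have h3 := EuclideanSpace.volume_preserving_symm_measurableEquiv_toLp (Fin d)
    exact h3.comp (h2.comp h1)
  have hsum : ∀ x : Fin d → ℝ, ∑ i, (R.symm x i)^2 = ∑ i, (x i)^2 := by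
    have hz : ∀ z : Fin d → ℝ, ∑ i, (z i)^2 = ‖(e.symm z)‖^2 := by
      intro z
      rw [EuclideanSpace.norm_eq, Real.sq_sqrt (Finset.sum_nonneg fun i _ => sq_nonneg _)]
      simp [Real.norm_eq_abs, sq_abs]
      rfl
    intro x
    have h1 : ∑ i, (R.symm x i)^2 = ‖(e.symm (R.symm x))‖^2 := hz _
    have h2 : e.symm (R.symm x) = b.repr.symm (e.symm x) := rfl
    rw [h1, h2, LinearIsometryEquiv.norm_map, ← hz]
  have hrot : (Measure.pi fun _ : Fin d => ν).map (⇑R) = Measure.pi fun _ : Fin d => ν := by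
    rw [hν, my_pi_gaussian]
    have hG : Measurable fun x : Fin d → ℝ => ∏ i, gaussianPDF 0 1 (x i) :=
      Finset.measurable_prod _ fun i _ =>
        (measurable_gaussianPDF 0 1).comp (measurable_pi_apply i)
    rw [show ((Measure.pi fun _ : Fin d => (volume : Measure ℝ))) = (volume : Measure (Fin d → ℝ)) from (volume_pi).symm,
      my_map_withDensity _ R _ hG, hmp.map_eq]
    congr 1
    funext x
    show ∏ i, gaussianPDF 0 1 (R.symm x i) = ∏ i, gaussianPDF 0 1 (x i)
    rw [my_prod_gaussianPDF, my_prod_gaussianPDF, hsum]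
  rw [hrot, hν]
  exact my_pi_map_eval _ i₀

lemma my_infDist {d : ℕ} (a : EuclideanSpace ℝ (Fin d)) (ha : a ≠ 0)
    (x : EuclideanSpace ℝ (Fin d)) :
    Metric.infDist x {z : EuclideanSpace ℝ (Fin d) | (inner ℝ a z : ℝ) ≤ 0}
      = max ((inner ℝ a x : ℝ) / ‖a‖) 0 := by
  set S : Set (EuclideanSpace ℝ (Fin d)) := {z | (inner ℝ a z : ℝ) ≤ 0} with hS
  have hna : (0 : ℝ) < ‖a‖ := norm_pos_iff.2 ha
  have hne : S.Nonempty := ⟨0, by simp [hS]⟩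
  have hmax : max ((inner ℝ a x : ℝ) / ‖a‖) 0 = max (inner ℝ a x : ℝ) 0 / ‖a‖ := by
    rw [← max_div_div_right hna.le (inner ℝ a x : ℝ) 0, zero_div]
  refine le_antisymm ?_ ?_
  · set c : ℝ := max (inner ℝ a x : ℝ) 0 / ‖a‖ ^ 2 with hc
    have hcnn : 0 ≤ c := div_nonneg (le_max_right _ _) (sq_nonneg _)
    have htS : x - c • a ∈ S := by
      simp only [hS, Set.mem_setOf_eq, inner_sub_right, real_inner_smul_right,
        real_inner_self_eq_norm_sq]
      rw [hc, div_mul_cancel₀ _ (by positivity)]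
      have := le_max_left (inner ℝ a x : ℝ) 0
      linarith
    calc Metric.infDist x S ≤ dist x (x - c • a) := Metric.infDist_le_dist_of_mem htS
      _ = ‖c • a‖ := by rw [dist_eq_norm]; congr 1; abel
      _ = c * ‖a‖ := by rw [norm_smul, Real.norm_eq_abs, abs_of_nonneg hcnn]
      _ = max ((inner ℝ a x : ℝ) / ‖a‖) 0 := by
          rw [hmax, hc]
          field_simp
  · rw [hmax]
    refine le_of_not_gt fun hlt => ?_
    obtain ⟨y, hy, hdy⟩ := (Metric.infDist_lt_iff hne).1 hlt
    rw [dist_eq_norm] at hdy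
    have h1 : (inner ℝ a x : ℝ) ≤ ‖a‖ * ‖x - y‖ := by
      have h2 : (inner ℝ a (x - y) : ℝ) ≤ ‖a‖ * ‖x - y‖ := real_inner_le_norm a (x - y)
      have h3 : (inner ℝ a y : ℝ) ≤ 0 := hy
      rw [inner_sub_right] at h2
      linarith
    have h4 : (0 : ℝ) ≤ ‖a‖ * ‖x - y‖ := by positivity
    have h5 : max (inner ℝ a x : ℝ) 0 ≤ ‖a‖ * ‖x - y‖ := max_le h1 h4
    rw [lt_div_iff₀ hna] at hdy
    linarith [mul_comm ‖a‖ ‖x - y‖]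

/-- For `Z ~ N(0, I_{d*})` and closed half-spaces `T₁ = {z : a'z ≤ 0}`, `T₂ = {z : b'z ≤ 0}`
with `a, b ≠ 0`, the statistic `W* = max_i inf_{t ∈ T_i} ‖Z - t‖²` satisfies
`P(W* ≤ w) ≥ F_{χ²₁}(w)` for all `w ≥ 0`. -/
theorem stmt5 {d : ℕ} (hd : 1 ≤ d) {Ω : Type*} [MeasurableSpace Ω]
    (μ : Measure Ω) [IsProbabilityMeasure μ]
    (Z : Ω → EuclideanSpace ℝ (Fin d)) (hZm : Measurable Z)
    (hlaw : ∀ i : Fin d, Measure.map (fun ω => Z ω i) μ = gaussianReal 0 1)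
    (hindep : iIndepFun (fun (i : Fin d) (ω : Ω) => Z ω i) μ)
    (a b : EuclideanSpace ℝ (Fin d)) (ha : a ≠ 0) (hb : b ≠ 0)
    (w : ℝ) (hw : 0 ≤ w) :
    ((gaussianReal 0 1) {x : ℝ | x ^ 2 ≤ w}).toReal ≤
      (μ {ω | max ((Metric.infDist (Z ω) {z : EuclideanSpace ℝ (Fin d) | (inner ℝ a z : ℝ) ≤ 0}) ^ 2)
              ((Metric.infDist (Z ω) {z : EuclideanSpace ℝ (Fin d) | (inner ℝ b z : ℝ) ≤ 0}) ^ 2)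
            ≤ w}).toReal := by
  classical
  set ν : Measure ℝ := gaussianReal 0 1 with hν
  set s : ℝ := Real.sqrt w with hs
  have hs0 : 0 ≤ s := Real.sqrt_nonneg w
  have hs2 : s ^ 2 = w := Real.sq_sqrt hw
  -- unit vectors
  have hnorm_smul : ∀ c : EuclideanSpace ℝ (Fin d), c ≠ 0 → ‖‖c‖⁻¹ • c‖ = 1 := by
    intro c hc
    rw [norm_smul, norm_inv, norm_norm, inv_mul_cancel₀ (norm_ne_zero_iff.2 hc)]
  set ua : EuclideanSpace ℝ (Fin d) := ‖a‖⁻¹ • a with hua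
  set ub : EuclideanSpace ℝ (Fin d) := ‖b‖⁻¹ • b with hub
  -- pointwise description of the event
  have hiff : ∀ (c : EuclideanSpace ℝ (Fin d)) (hc : c ≠ 0) (x : EuclideanSpace ℝ (Fin d)),
      ((Metric.infDist x {z : EuclideanSpace ℝ (Fin d) | (inner ℝ c z : ℝ) ≤ 0}) ^ 2 ≤ w
        ↔ (inner ℝ (‖c‖⁻¹ • c) x : ℝ) ≤ s) := by
    intro c hc x
    rw [my_infDist c hc x]
    have hm0 : 0 ≤ max ((inner ℝ c x : ℝ) / ‖c‖) 0 := le_max_right _ _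
    have hsq : (max ((inner ℝ c x : ℝ) / ‖c‖) 0) ^ 2 ≤ w ↔ max ((inner ℝ c x : ℝ) / ‖c‖) 0 ≤ s := by
      rw [← hs2]
      constructor
      · intro h; nlinarith
      · intro h; nlinarith
    rw [hsq, max_le_iff]
    have hinner : (inner ℝ (‖c‖⁻¹ • c) x : ℝ) = (inner ℝ c x : ℝ) / ‖c‖ := by
      rw [real_inner_smul_left, div_eq_inv_mul]
    rw [hinner]
    exact ⟨fun h => h.1, fun h => ⟨h, hs0⟩⟩
  -- measurable linear functionals
  have hfm : ∀ u : EuclideanSpace ℝ (Fin d), Measurable fun ω => (inner ℝ u (Z ω) : ℝ) := by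
    intro u
    exact ((continuous_const.inner continuous_id).measurable).comp hZm
  -- event rewriting
  set A : Set Ω := (fun ω => (inner ℝ ua (Z ω) : ℝ)) ⁻¹' Set.Iic s with hA
  set B : Set Ω := (fun ω => (inner ℝ ub (Z ω) : ℝ)) ⁻¹' Set.Iic s with hB
  have hAm : MeasurableSet A := (hfm ua) measurableSet_Iic
  have hBm : MeasurableSet B := (hfm ub) measurableSet_Iic
  have hevent : {ω | max ((Metric.infDist (Z ω) {z : EuclideanSpace ℝ (Fin d) | (inner ℝ a z : ℝ) ≤ 0}) ^ 2)
              ((Metric.infDist (Z ω) {z : EuclideanSpace ℝ (Fin d) | (inner ℝ b z : ℝ) ≤ 0}) ^ 2)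
            ≤ w} = A ∩ B := by
    ext ω
    simp only [Set.mem_setOf_eq, max_le_iff, Set.mem_inter_iff, hA, hB, Set.mem_preimage,
      Set.mem_Iic]
    rw [hiff a ha (Z ω), hiff b hb (Z ω)]
  rw [hevent]
  -- laws
  have hlawa : μ.map (fun ω => (inner ℝ ua (Z ω) : ℝ)) = ν :=
    my_law_inner hd μ Z hZm hlaw hindep ua (hnorm_smul a ha)
  have hlawb : μ.map (fun ω => (inner ℝ ub (Z ω) : ℝ)) = ν :=
    my_law_inner hd μ Z hZm hlaw hindep ub (hnorm_smul b hb)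
  have hAc : μ Aᶜ = ν (Set.Ioi s) := by
    have : Aᶜ = (fun ω => (inner ℝ ua (Z ω) : ℝ)) ⁻¹' Set.Ioi s := by
      rw [hA, ← Set.preimage_compl, Set.compl_Iic]
    rw [this, ← Measure.map_apply (hfm ua) measurableSet_Ioi, hlawa]
  have hBc : μ Bᶜ = ν (Set.Ioi s) := by
    have : Bᶜ = (fun ω => (inner ℝ ub (Z ω) : ℝ)) ⁻¹' Set.Ioi s := by
      rw [hB, ← Set.preimage_compl, Set.compl_Iic]
    rw [this, ← Measure.map_apply (hfm ub) measurableSet_Ioi, hlawb]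
  -- symmetry of the gaussian
  have hsym : ν (Set.Iio (-s)) = ν (Set.Ioi s) := by
    have hmapneg : ν.map (fun x : ℝ => -1 * x) = ν := by
      rw [hν, gaussianReal_map_const_mul (-1)]
      norm_num
    conv_lhs => rw [← hmapneg]
    rw [Measure.map_apply (measurable_const_mul (-1)) measurableSet_Iio]
    congr 1
    ext x
    simp only [Set.mem_preimage, Set.mem_Iio, Set.mem_Ioi]
    constructor <;> intro h <;> linarith
  -- the set {x | x^2 ≤ w}
  have hset : {x : ℝ | x ^ 2 ≤ w} = (Set.Iio (-s) ∪ Set.Ioi s)ᶜ := by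
    ext x
    simp only [Set.mem_setOf_eq, Set.mem_compl_iff, Set.mem_union, Set.mem_Iio, Set.mem_Ioi,
      not_or, not_lt]
    rw [← hs2]
    constructor
    · intro h
      constructor <;> nlinarith
    · rintro ⟨h1, h2⟩
      nlinarith
  have hdisj : Disjoint (Set.Iio (-s)) (Set.Ioi s) := by
    rw [Set.disjoint_left]
    intro x h1 h2
    simp only [Set.mem_Iio, Set.mem_Ioi] at h1 h2
    linarith
  have hmeasu : MeasurableSet (Set.Iio (-s) ∪ Set.Ioi s) :=
    measurableSet_Iio.union measurableSet_Ioi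
  have hL : ν {x : ℝ | x ^ 2 ≤ w} = 1 - (ν (Set.Ioi s) + ν (Set.Ioi s)) := by
    rw [hset, measure_compl hmeasu (measure_ne_top _ _),
      measure_union hdisj measurableSet_Ioi, hsym, measure_univ]
  -- lower bound for the event
  have hineq : ν {x : ℝ | x ^ 2 ≤ w} ≤ μ (A ∩ B) := by
    rw [hL]
    have h1 : μ (A ∩ B) = 1 - μ (Aᶜ ∪ Bᶜ) := by
      rw [← Set.compl_inter, measure_compl (hAm.inter hBm) (measure_ne_top _ _), measure_univ]
      exact (ENNReal.sub_sub_cancel ENNReal.one_ne_top prob_le_one).symm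
    rw [h1]
    refine tsub_le_tsub_left ?_ 1
    calc μ (Aᶜ ∪ Bᶜ) ≤ μ Aᶜ + μ Bᶜ := measure_union_le _ _
      _ = ν (Set.Ioi s) + ν (Set.Ioi s) := by rw [hAc, hBc]
  exact ENNReal.toReal_mono (measure_ne_top _ _) hineq
end
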